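/- arXiv:1702.05554 — 5 statements merged into one kernel-verified Lean document; each statement's English description precedes it below -/
import Mathlib

section
/- Let $k$ be a field of characteristic $0$ and let $f(x,y) \in k[[x,y]]$ be a formal power series in two variables. Then there exists a unique formal power series $y \in x\,k[[x]]$ (i.e. with zero constant term) such that $y' = f(x,y)$, where $y'$ denotes the formal derivative of $y$ and $f(x,y)$ denotes substitution of $y$ into the second variable of $f$. -/
open PowerSeries

/-- Substitution of a one-variable power series `g` (with zero constant term) into the
second variable of a two-variable power series `f`, and of `X` into the first variable:
the coefficient of `x^n` in `f(x, g)`. -/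
noncomputable def substXY {k : Type*} [Field k] (f : MvPowerSeries (Fin 2) k)
    (g : PowerSeries k) : PowerSeries k :=
  PowerSeries.mk fun n =>
    ∑ p ∈ Finset.range (n + 1) ×ˢ Finset.range (n + 1),
      MvPowerSeries.coeff (Finsupp.single (0 : Fin 2) p.1 + Finsupp.single (1 : Fin 2) p.2) f
        * PowerSeries.coeff (n - p.1) (g ^ p.2)


/-- Coefficients of powers only depend on low-order coefficients. -/
lemma coeff_pow_congr {k : Type*} [Field k] {g₁ g₂ : PowerSeries k} {n : ℕ}
    (h : ∀ i ≤ n, PowerSeries.coeff i g₁ = PowerSeries.coeff i g₂) :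
    ∀ j, ∀ m ≤ n, PowerSeries.coeff m (g₁ ^ j) = PowerSeries.coeff m (g₂ ^ j) := by
  intro j
  induction j with
  | zero => intro m _; simp
  | succ j ih =>
    intro m hm
    rw [pow_succ, pow_succ, PowerSeries.coeff_mul, PowerSeries.coeff_mul]
    refine Finset.sum_congr rfl fun p hp => ?_
    rw [Finset.HasAntidiagonal.mem_antidiagonal] at hp
    rw [ih p.1 (le_trans (by omega) hm), h p.2 (le_trans (by omega) hm)]

lemma coeff_substXY_congr {k : Type*} [Field k] (f : MvPowerSeries (Fin 2) k)
    {g₁ g₂ : PowerSeries k} {n : ℕ}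
    (h : ∀ i ≤ n, PowerSeries.coeff i g₁ = PowerSeries.coeff i g₂) :
    PowerSeries.coeff n (substXY f g₁) = PowerSeries.coeff n (substXY f g₂) := by
  simp only [substXY, PowerSeries.coeff_mk]
  refine Finset.sum_congr rfl fun p _ => ?_
  rw [coeff_pow_congr h p.2 (n - p.1) (Nat.sub_le n p.1)]

noncomputable def solFun {k : Type*} [Field k] (f : MvPowerSeries (Fin 2) k) : ℕ → k
  | 0 => 0
  | (n + 1) =>
      ((n : k) + 1)⁻¹ *
        PowerSeries.coeff n
          (substXY f (PowerSeries.mk fun i => if h : i < n + 1 then solFun f i else 0))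
  termination_by n => n
  decreasing_by exact h

lemma solFun_succ {k : Type*} [Field k] (f : MvPowerSeries (Fin 2) k) (n : ℕ) :
    solFun f (n + 1) =
      ((n : k) + 1)⁻¹ *
        PowerSeries.coeff n
          (substXY f (PowerSeries.mk fun i => if _ : i < n + 1 then solFun f i else 0)) := by
  rw [solFun]

lemma coeff_trunc_sol {k : Type*} [Field k] (f : MvPowerSeries (Fin 2) k) (n : ℕ) :
    ∀ i ≤ n, PowerSeries.coeff i
        (PowerSeries.mk fun i => if _ : i < n + 1 then solFun f i else 0) =
      PowerSeries.coeff i (PowerSeries.mk (solFun f)) := by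
  intro i hi
  rw [PowerSeries.coeff_mk, PowerSeries.coeff_mk, dif_pos (by omega)]

lemma coeff_derivativeFun' {k : Type*} [Field k] (g : PowerSeries k) (n : ℕ) :
    PowerSeries.coeff n g.derivativeFun = PowerSeries.coeff (n + 1) g * (n + 1) :=
  PowerSeries.coeff_derivative g n

/-- **Picard–Lindelöf for formal power series.**  Over a field of characteristic `0`,
for any `f ∈ k[[x,y]]` there is a unique `y ∈ x·k[[x]]` with `y' = f(x, y)`. -/
theorem formal_ode_unique {k : Type*} [Field k] [CharZero k]
    (f : MvPowerSeries (Fin 2) k) :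
    ∃! y : PowerSeries k,
      PowerSeries.constantCoeff y = 0 ∧ y.derivativeFun = substXY f y := by
  refine ⟨PowerSeries.mk (solFun f), ⟨?_, ?_⟩, ?_⟩
  · rw [← PowerSeries.coeff_zero_eq_constantCoeff_apply, PowerSeries.coeff_mk]
    rw [solFun]
  · ext n
    rw [coeff_derivativeFun', PowerSeries.coeff_mk, solFun_succ,
      coeff_substXY_congr f (coeff_trunc_sol f n)]
    have hne : ((n : k) + 1) ≠ 0 := Nat.cast_add_one_ne_zero n
    push_cast
    field_simp
  · intro z hz
    ext n
    rw [PowerSeries.coeff_mk]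
    induction n using Nat.strong_induction_on with
    | _ n ih =>
      match n with
      | 0 =>
        rw [PowerSeries.coeff_zero_eq_constantCoeff_apply, hz.1, solFun]
      | (m + 1) =>
        have hd := congrArg (PowerSeries.coeff m) hz.2
        rw [coeff_derivativeFun'] at hd
        have hcong : PowerSeries.coeff m (substXY f z) =
            PowerSeries.coeff m
              (substXY f (PowerSeries.mk fun i => if _ : i < m + 1 then solFun f i else 0)) := by
          refine coeff_substXY_congr f fun i hi => ?_
          rw [PowerSeries.coeff_mk, dif_pos (by omega), ih i (by omega)]
        rw [hcong] at hd
        rw [solFun_succ]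
        have hne : ((m : k) + 1) ≠ 0 := Nat.cast_add_one_ne_zero m
        rw [← hd]
        push_cast
        field_simp
end

section
/- Let $k$ be a field and equip $k[[x]]$ with the $x$-adic norm $\|g\|_v = e^{-v(g)}$ where $v$ is the $x$-adic valuation. Let $f \in k[[x,y]]$ and assume $\mathrm{char}(k)=0$. Then the map $\varphi : x k[[x]] \to x k[[x]]$ sending $y$ to the formal antiderivative with zero constant term of $f(x,y)$ is a contraction: $\|\varphi(y_1)-\varphi(y_0)\|_v \le e^{-1}\|y_1-y_0\|_v$ for all $y_0, y_1 \in x k[[x]]$. -/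
open PowerSeries

/-- The formal antiderivative with zero constant term, `∑ aₙ xⁿ ↦ ∑ (aₙ/(n+1)) xⁿ⁺¹`. -/
noncomputable def formalAntideriv {k : Type*} [Field k] (g : PowerSeries k) : PowerSeries k :=
  PowerSeries.mk fun n => if n = 0 then 0 else PowerSeries.coeff (n - 1) g / (n : k)

/-- The `x`-adic norm `‖g‖ᵥ = e^{-v(g)}` on `k[[x]]` (with `‖0‖ᵥ = 0`). -/
noncomputable def xadicNorm {k : Type*} [Field k] (g : PowerSeries k) : ℝ :=
  open scoped Classical in
  if g = 0 then 0 else Real.exp (-(g.order.toNat : ℝ))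

private lemma pow_coeff_eq {k : Type*} [Field k] (y₀ y₁ : PowerSeries k) (J : ℕ)
    (h : ∀ i ≤ J, PowerSeries.coeff i y₀ = PowerSeries.coeff i y₁) :
    ∀ e, ∀ j ≤ J, PowerSeries.coeff j (y₀ ^ e) = PowerSeries.coeff j (y₁ ^ e) := by
  intro e
  induction e with
  | zero => simp
  | succ e ih =>
    intro j hj
    rw [pow_succ, pow_succ, PowerSeries.coeff_mul, PowerSeries.coeff_mul]
    refine Finset.sum_congr rfl fun p hp => ?_
    rw [Finset.HasAntidiagonal.mem_antidiagonal] at hp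
    rw [ih p.1 (le_trans (by omega) hj), h p.2 (le_trans (by omega) hj)]

/-- The map `y ↦ ∫₀ˣ f(α, y) dα` is a contraction on `x·k[[x]]` with contraction
constant `e⁻¹` for the `x`-adic norm. -/
theorem antideriv_subst_contraction {k : Type*} [Field k] [CharZero k]
    (f : MvPowerSeries (Fin 2) k) (y₀ y₁ : PowerSeries k)
    (h₀ : PowerSeries.constantCoeff y₀ = 0) (h₁ : PowerSeries.constantCoeff y₁ = 0) :
    xadicNorm (formalAntideriv (substXY f y₁) - formalAntideriv (substXY f y₀)) ≤
      (Real.exp 1)⁻¹ * xadicNorm (y₁ - y₀) := by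
  classical
  set Δ := formalAntideriv (substXY f y₁) - formalAntideriv (substXY f y₀) with hΔ
  by_cases hy : y₁ - y₀ = 0
  · have : y₁ = y₀ := by rwa [sub_eq_zero] at hy
    subst this
    simp [hΔ, xadicNorm]
  · set d : ℕ := (y₁ - y₀).order.toNat with hd
    have hord : (y₁ - y₀).order = (d : ℕ∞) := by
      rw [hd, ENat.coe_toNat (PowerSeries.order_finite_iff_ne_zero.mpr hy).ne]
    have hagree : ∀ i < d, PowerSeries.coeff i y₀ = PowerSeries.coeff i y₁ := by
      intro i hi
      have : PowerSeries.coeff i (y₁ - y₀) = 0 := by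
        apply PowerSeries.coeff_of_lt_order
        rw [hord]
        exact_mod_cast hi
      rw [map_sub, sub_eq_zero] at this
      exact this.symm
    -- coefficients of Δ vanish up to degree d
    have hcoeff : ∀ n ≤ d, PowerSeries.coeff n Δ = 0 := by
      intro n hn
      rw [hΔ, map_sub]
      rcases Nat.eq_zero_or_pos n with rfl | hnpos
      · simp [formalAntideriv]
      · have hsub : PowerSeries.coeff (n - 1) (substXY f y₁) =
            PowerSeries.coeff (n - 1) (substXY f y₀) := by
          simp only [substXY, PowerSeries.coeff_mk]
          refine Finset.sum_congr rfl fun p hp => ?_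
          congr 1
          refine (pow_coeff_eq y₀ y₁ (n - 1)
            (fun i hi => hagree i (by omega)) p.2 (n - 1 - p.1) (by omega)).symm
        simp [formalAntideriv, hsub]
    have hΔ0 : xadicNorm (y₁ - y₀) = Real.exp (-(d : ℝ)) := by
      simp [xadicNorm, hy, hd]
    by_cases hΔz : Δ = 0
    · rw [hΔz]
      simp only [xadicNorm, if_pos rfl]
      positivity
    · have hle : (d : ℕ∞) + 1 ≤ Δ.order := by
        have := PowerSeries.nat_le_order Δ (d + 1) (fun i hi => hcoeff i (by omega))
        exact_mod_cast this
      have hfin : Δ.order ≠ ⊤ := (PowerSeries.order_finite_iff_ne_zero.mpr hΔz).ne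
      have hdt : d + 1 ≤ Δ.order.toNat := by
        have h2 : ((d + 1 : ℕ) : ℕ∞) ≤ Δ.order := by exact_mod_cast hle
        have h3 := ENat.toNat_le_toNat h2 hfin
        rwa [ENat.toNat_natCast] at h3
      rw [xadicNorm, if_neg hΔz, hΔ0, ← Real.exp_neg, ← Real.exp_add]
      apply Real.exp_le_exp.mpr
      have : (d + 1 : ℝ) ≤ (Δ.order.toNat : ℝ) := by exact_mod_cast hdt
      linarith
end

section
/- Let $k$ be a field of characteristic $0$ and $a \in k$. If the binomial power series $(1+x)^a = \sum_{n \ge 0} \binom{a}{n} x^n$ is algebraic over the polynomial ring $k[x]$ (i.e. satisfies a nonzero polynomial relation with coefficients in $k[x]$), then $a$ is rational, i.e. $a$ lies in the prime field $\mathbb{Q} \subseteq k$. -/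
open PowerSeries Polynomial

/-- The generalized binomial coefficient `a(a-1)⋯(a-n+1)/n!`. -/
noncomputable def genBinom {k : Type*} [Field k] (a : k) (n : ℕ) : k :=
  (∏ i ∈ Finset.range n, (a - (i : k))) / (n.factorial : k)

/-- The binomial power series `(1+x)^a = ∑_{n ≥ 0} (a choose n) xⁿ`. -/
noncomputable def binomSeries {k : Type*} [Field k] (a : k) : PowerSeries k :=
  PowerSeries.mk fun n => genBinom a n

lemma genBinom_succ {k : Type*} [Field k] [CharZero k] (a : k) (n : ℕ) :
    genBinom a (n + 1) * ((n : k) + 1) = (a - n) * genBinom a n := by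
  have h1 : ((n.factorial : k)) ≠ 0 := Nat.cast_ne_zero.mpr n.factorial_ne_zero
  have h2 : (((n+1).factorial : k)) ≠ 0 := Nat.cast_ne_zero.mpr (n+1).factorial_ne_zero
  simp only [genBinom, Finset.prod_range_succ, Nat.factorial_succ, Nat.cast_mul,
    Nat.cast_add, Nat.cast_one]
  have h3 : ((n:k)+1) ≠ 0 := by exact Nat.cast_add_one_ne_zero n
  field_simp

lemma binom_ode {k : Type*} [Field k] [CharZero k] (a : k) :
    (1 + PowerSeries.X) * (d⁄dX k) (binomSeries a) = PowerSeries.C a * binomSeries a := by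
  ext n
  rw [add_mul, one_mul, map_add, PowerSeries.coeff_C_mul]
  cases n with
  | zero =>
      simp [PowerSeries.coeff_derivative, coeff_zero_X_mul, binomSeries, genBinom]
  | succ m =>
      rw [coeff_succ_X_mul, PowerSeries.coeff_derivative, PowerSeries.coeff_derivative]
      simp only [binomSeries, coeff_mk]
      have := genBinom_succ a (m + 1)
      push_cast at this ⊢
      have h2 := genBinom_succ a m
      push_cast at h2
      linear_combination this

lemma poly_coe_natCast {k : Type*} [Field k] (m : ℕ) :
    ((m : Polynomial k) : PowerSeries k) = (m : PowerSeries k) := by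
  rw [← Polynomial.coeToPowerSeries.ringHom_apply, map_natCast]

lemma term_deriv {k : Type*} [Field k] [CharZero k] (a : k) (c : Polynomial k) (j : ℕ) :
    (1 + PowerSeries.X) * ((d⁄dX k) ((c : PowerSeries k) * (binomSeries a) ^ j)) =
      (((Polynomial.X + 1) * Polynomial.derivative c
          + (j : Polynomial k) * (Polynomial.C a * c) : Polynomial k) : PowerSeries k)
        * (binomSeries a) ^ j := by
  have hODE := binom_ode a
  cases j with
  | zero =>
      simp only [pow_zero, mul_one, Nat.cast_zero, zero_mul, add_zero,
        PowerSeries.derivative_coe, Polynomial.coe_mul, Polynomial.coe_add,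
        Polynomial.coe_one, Polynomial.coe_X]
      ring
  | succ m =>
      rw [Derivation.leibniz, Derivation.leibniz_pow]
      simp only [Nat.succ_sub_one, smul_eq_mul, nsmul_eq_mul, PowerSeries.derivative_coe,
        Polynomial.coe_add, Polynomial.coe_mul, Polynomial.coe_one, Polynomial.coe_X,
        Polynomial.coe_C, poly_coe_natCast, Nat.cast_succ]
      linear_combination ((c : PowerSeries k) * ((m : PowerSeries k) + 1)
        * (binomSeries a) ^ m) * hODE

lemma s_mul_deriv {k : Type*} [Field k] (m : ℕ) (w : Polynomial k) :
    (Polynomial.X + 1) * Polynomial.derivative ((Polynomial.X + 1) ^ m * w)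
      = Polynomial.C (m : k) * ((Polynomial.X + 1) ^ m * w)
        + (Polynomial.X + 1) ^ m * ((Polynomial.X + 1) * Polynomial.derivative w) := by
  rw [Polynomial.derivative_mul, Polynomial.derivative_pow]
  cases m with
  | zero => simp
  | succ l =>
      simp only [Nat.succ_sub_one, Polynomial.derivative_add, Polynomial.derivative_X,
        Polynomial.derivative_one, add_zero, mul_one, Nat.cast_succ, pow_succ]
      ring

lemma int_of_wronskian {k : Type*} [Field k] (u v : Polynomial k) (hu : u ≠ 0) (hv : v ≠ 0)
    (b : k)
    (h : (Polynomial.X + 1) * (Polynomial.derivative u * v - u * Polynomial.derivative v)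
        = Polynomial.C b * (u * v)) : ∃ z : ℤ, b = (z : k) := by
  set s : Polynomial k := Polynomial.X + 1 with hs
  have hsC : s = Polynomial.X - Polynomial.C (-1 : k) := by
    rw [map_neg, map_one, sub_neg_eq_add]
  have hs0 : s ≠ 0 := by
    rw [hsC]; exact Polynomial.X_sub_C_ne_zero (-1)
  obtain ⟨u1, hu1, hu1nd⟩ := u.exists_eq_pow_rootMultiplicity_mul_and_not_dvd hu (-1)
  obtain ⟨v1, hv1, hv1nd⟩ := v.exists_eq_pow_rootMultiplicity_mul_and_not_dvd hv (-1)
  set p := Polynomial.rootMultiplicity (-1) u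
  set q := Polynomial.rootMultiplicity (-1) v
  rw [← hsC] at hu1 hv1 hu1nd hv1nd
  have hu1e : u1.eval (-1) ≠ 0 := fun he => hu1nd (by rw [hsC]; exact Polynomial.dvd_iff_isRoot.mpr he)
  have hv1e : v1.eval (-1) ≠ 0 := fun he => hv1nd (by rw [hsC]; exact Polynomial.dvd_iff_isRoot.mpr he)
  rw [hu1, hv1] at h
  have h1 := s_mul_deriv (k := k) p u1
  have h2 := s_mul_deriv (k := k) q v1
  rw [← hs] at h1 h2
  have key : s ^ (p + q) * ((Polynomial.C ((p : k) - (q : k))) * (u1 * v1)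
        + s * (Polynomial.derivative u1 * v1 - u1 * Polynomial.derivative v1))
      = s ^ (p + q) * (Polynomial.C b * (u1 * v1)) := by
    rw [map_sub]
    linear_combination h - (s ^ q * v1) * h1 + (s ^ p * u1) * h2
  have key2 := mul_left_cancel₀ (pow_ne_zero (p + q) hs0) key
  have := congrArg (Polynomial.eval (-1)) key2
  simp only [Polynomial.eval_add, Polynomial.eval_mul, Polynomial.eval_sub, Polynomial.eval_C,
    Polynomial.eval_X, Polynomial.eval_one, hs] at this
  rw [show (-1 : k) + 1 = 0 by ring] at this
  simp only [zero_mul, add_zero] at this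
  have hb : (p : k) - (q : k) = b :=
    mul_right_cancel₀ (mul_ne_zero hu1e hv1e) this
  exact ⟨(p : ℤ) - (q : ℤ), by push_cast; exact hb.symm⟩

/-- If the binomial series `(1+x)^a` is algebraic over `k[x]` (`k` of characteristic
zero), then `a` is rational. -/
theorem binomSeries_algebraic_imp_rational {k : Type*} [Field k] [CharZero k] (a : k)
    (h : ∃ P : Polynomial (Polynomial k), P ≠ 0 ∧
      Polynomial.eval₂ (Polynomial.coeToPowerSeries.ringHom) (binomSeries a) P = 0) :
    ∃ q : ℚ, a = (q : k) := by
  have hf0 : binomSeries a ≠ 0 := by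
    intro h0
    have h1 := congrArg (PowerSeries.coeff 0) h0
    simp [binomSeries, genBinom] at h1
  suffices H : ∀ n : ℕ, ∀ P : Polynomial (Polynomial k), P.natDegree = n → P ≠ 0 →
      Polynomial.eval₂ Polynomial.coeToPowerSeries.ringHom (binomSeries a) P = 0 →
      ∃ q : ℚ, a = (q : k) by
    obtain ⟨P, hP0, hPf⟩ := h
    exact H P.natDegree P rfl hP0 hPf
  intro n
  induction n using Nat.strong_induction_on with
  | _ n ih =>
  intro P hn hP0 hPf
  set φ : Polynomial k →+* PowerSeries k := Polynomial.coeToPowerSeries.ringHom with hφ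
  set c : ℕ → Polynomial k := fun j => P.coeff j with hc
  set Q : ℕ → Polynomial k := fun j =>
    (Polynomial.X + 1) * Polynomial.derivative (c j)
      + (j : Polynomial k) * (Polynomial.C a * c j) with hQ
  have hcn : c n ≠ 0 := by
    have h1 := Polynomial.leadingCoeff_ne_zero.mpr hP0
    rwa [Polynomial.leadingCoeff, hn] at h1
  have hsum : ∑ j ∈ Finset.range (n + 1), φ (c j) * (binomSeries a) ^ j = 0 := by
    rw [Polynomial.eval₂_eq_sum_range, hn] at hPf
    exact hPf
  have hsum2 : ∑ j ∈ Finset.range (n + 1), φ (Q j) * (binomSeries a) ^ j = 0 := by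
    have hterm : ∀ j ∈ Finset.range (n + 1), φ (Q j) * (binomSeries a) ^ j
        = (1 + PowerSeries.X) * ((d⁄dX k) (φ (c j) * (binomSeries a) ^ j)) := by
      intro j _
      rw [hφ, Polynomial.coeToPowerSeries.ringHom_apply,
        Polynomial.coeToPowerSeries.ringHom_apply, hQ]
      exact (term_deriv a (c j) j).symm
    have hDsum : (d⁄dX k) (∑ j ∈ Finset.range (n + 1), φ (c j) * (binomSeries a) ^ j)
        = ∑ j ∈ Finset.range (n + 1), (d⁄dX k) (φ (c j) * (binomSeries a) ^ j) :=
      _root_.map_sum (d⁄dX k) (fun j => φ (c j) * (binomSeries a) ^ j) (Finset.range (n + 1))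
    rw [Finset.sum_congr rfl hterm, ← Finset.mul_sum, ← hDsum, hsum, map_zero, mul_zero]
  set R : Polynomial (Polynomial k) := ∑ j ∈ Finset.range (n + 1),
    Polynomial.monomial j (c n * Q j - Q n * c j) with hR
  have hRcoeff : ∀ m, R.coeff m
      = if m ∈ Finset.range (n + 1) then c n * Q m - Q n * c m else 0 := by
    intro m
    rw [hR, Polynomial.finset_sum_coeff]
    simp only [Polynomial.coeff_monomial]
    exact Finset.sum_ite_eq' (Finset.range (n + 1)) m (fun j => c n * Q j - Q n * c j)
  have hReval : Polynomial.eval₂ φ (binomSeries a) R = 0 := by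
    rw [hR, Polynomial.eval₂_finset_sum]
    calc ∑ j ∈ Finset.range (n + 1),
          Polynomial.eval₂ φ (binomSeries a) (Polynomial.monomial j (c n * Q j - Q n * c j))
        = ∑ j ∈ Finset.range (n + 1), (φ (c n) * (φ (Q j) * (binomSeries a) ^ j)
            - φ (Q n) * (φ (c j) * (binomSeries a) ^ j)) := by
          refine Finset.sum_congr rfl fun j _ => ?_
          rw [Polynomial.eval₂_monomial, map_sub, map_mul, map_mul]
          ring
      _ = φ (c n) * (∑ j ∈ Finset.range (n + 1), φ (Q j) * (binomSeries a) ^ j)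
            - φ (Q n) * (∑ j ∈ Finset.range (n + 1), φ (c j) * (binomSeries a) ^ j) := by
          rw [Finset.sum_sub_distrib, Finset.mul_sum, Finset.mul_sum]
      _ = 0 := by rw [hsum, hsum2, mul_zero, mul_zero, sub_zero]
  by_cases hR0 : R = 0
  · have hid : ∀ j, j < n → c n * Q j = Q n * c j := by
      intro j hj
      have h1 := hRcoeff j
      rw [hR0, Polynomial.coeff_zero,
        if_pos (Finset.mem_range.mpr (Nat.lt_succ_of_lt hj))] at h1
      exact sub_eq_zero.mp h1.symm
    by_cases hex : ∃ i, i < n ∧ c i ≠ 0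
    · obtain ⟨i, hi, hci⟩ := hex
      have hw : (Polynomial.X + 1) * (Polynomial.derivative (c i) * c n
            - c i * Polynomial.derivative (c n))
          = Polynomial.C (((n : k) - (i : k)) * a) * (c i * c n) := by
        have h1 := hid i hi
        rw [hQ] at h1
        simp only at h1
        rw [map_mul, map_sub, Polynomial.C_eq_natCast, Polynomial.C_eq_natCast]
        linear_combination h1
      obtain ⟨z, hz⟩ := int_of_wronskian (c i) (c n) hci hcn _ hw
      have hni : ((n : k) - (i : k)) ≠ 0 :=
        sub_ne_zero.mpr (by exact_mod_cast (Nat.ne_of_gt hi : n ≠ i))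
      refine ⟨(z : ℚ) / ((n : ℚ) - (i : ℚ)), ?_⟩
      push_cast
      rw [eq_div_iff hni]
      linear_combination hz
    · push_neg at hex
      have hone : ∑ j ∈ Finset.range (n + 1), φ (c j) * (binomSeries a) ^ j
          = φ (c n) * (binomSeries a) ^ n := by
        apply Finset.sum_eq_single_of_mem n (Finset.self_mem_range_succ n)
        intro j hjmem hjne
        rw [hex j (lt_of_le_of_ne (Nat.lt_succ_iff.mp (Finset.mem_range.mp hjmem)) hjne),
          map_zero, zero_mul]
      rw [hsum] at hone
      have hne : φ (c n) * (binomSeries a) ^ n ≠ 0 := by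
        refine mul_ne_zero ?_ (pow_ne_zero _ hf0)
        intro hc0
        apply hcn
        have := Polynomial.coe_eq_zero_iff (φ := c n) |>.mp ?_
        · exact this
        · rwa [hφ, Polynomial.coeToPowerSeries.ringHom_apply] at hc0
      exact absurd hone.symm hne
  · have hdeg : R.natDegree < n := by
      rw [Polynomial.natDegree_lt_iff_degree_lt hR0]
      rw [Polynomial.degree_lt_iff_coeff_zero]
      intro m hm
      rw [hRcoeff m]
      rcases eq_or_lt_of_le hm with heq | hlt
      · rw [if_pos (Finset.mem_range.mpr (by omega)), ← heq, mul_comm, sub_self]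
      · rw [if_neg (by simp [Finset.mem_range]; omega)]
    exact ih R.natDegree hdeg R rfl hR0 hReval
end

section
/- Let $k$ be a field of characteristic $p > 0$ and $a \in k$. The formal differential equation $y' = a \cdot \frac{1+y}{1+x}$ has a solution $y \in k[[x]]$ with zero constant term if and only if $a$ lies in the prime field $\mathbb{F}_p \subseteq k$ (in which case, writing $a$ as the image of an integer $0 \le m < p$, the polynomial $(1+x)^m - 1$ is a solution). -/
open PowerSeries

lemma coeff_derivativeFun_aux {k : Type*} [Field k] (f : PowerSeries k) (n : ℕ) :
    coeff n f.derivativeFun = coeff (n + 1) f * (n + 1) :=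
  coeff_derivative f n

lemma aux_inv {k : Type*} [Field k] :
    (1 + X : PowerSeries k) * (1 + X)⁻¹ = 1 :=
  PowerSeries.mul_inv_cancel _ (by simp)

lemma aux_deriv_pow {k : Type*} [Field k] (m : ℕ) :
    ((1 + X : PowerSeries k) ^ m - 1).derivativeFun
      = PowerSeries.C (m : k) * (1 + X) ^ (m - 1) := by
  have h1 : (d⁄dX k) (1 + X : PowerSeries k) = 1 := by
    rw [map_add, derivative_X]
    simp
  have : ((1 + X : PowerSeries k) ^ m - 1).derivativeFun
      = (d⁄dX k) ((1 + X : PowerSeries k) ^ m - 1) := rfl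
  rw [this, map_sub, Derivation.map_one_eq_zero, sub_zero, Derivation.leibniz_pow, h1,
    smul_eq_mul, mul_one, nsmul_eq_mul, map_natCast]

lemma aux_sol {k : Type*} [Field k] (m : ℕ) :
    PowerSeries.constantCoeff ((1 + PowerSeries.X : PowerSeries k) ^ m - 1) = 0 ∧
    ((1 + PowerSeries.X : PowerSeries k) ^ m - 1).derivativeFun =
      PowerSeries.C (m : k) * (1 + ((1 + PowerSeries.X : PowerSeries k) ^ m - 1)) *
        (1 + PowerSeries.X)⁻¹ := by
  constructor
  · simp
  · rw [aux_deriv_pow]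
    have h2 : (1 : PowerSeries k) + ((1 + X) ^ m - 1) = (1 + X) ^ m := by ring
    rw [h2]
    cases m with
    | zero => simp
    | succ n =>
        rw [Nat.succ_sub_one, pow_succ, ← mul_assoc, mul_assoc _ (1 + X) _, aux_inv, mul_one]

/-- In characteristic `p > 0`, the formal ODE `y' = a (1+y)/(1+x)` has a solution
`y ∈ k[[x]]` with zero constant term if and only if `a` lies in the prime field
`𝔽_p ⊆ k`; in that case, writing `a` as the image of `0 ≤ m < p`, the polynomial
`(1+x)^m - 1` is a solution. -/
theorem ode_mult_solvable_iff_Fp {k : Type*} [Field k] (p : ℕ) [Fact p.Prime]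
    [CharP k p] (a : k) :
    ((∃ y : PowerSeries k, PowerSeries.constantCoeff y = 0 ∧
        y.derivativeFun = PowerSeries.C a * (1 + y) * (1 + PowerSeries.X)⁻¹) ↔
      ∃ m : ℕ, m < p ∧ a = (m : k)) ∧
    ∀ m : ℕ, m < p → a = (m : k) →
      PowerSeries.constantCoeff ((1 + PowerSeries.X : PowerSeries k) ^ m - 1) = 0 ∧
      ((1 + PowerSeries.X : PowerSeries k) ^ m - 1).derivativeFun =
        PowerSeries.C a * (1 + ((1 + PowerSeries.X : PowerSeries k) ^ m - 1)) *
          (1 + PowerSeries.X)⁻¹ := by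
  refine ⟨⟨?_, fun ⟨m, _, ha⟩ => ⟨(1 + X) ^ m - 1, ha ▸ aux_sol m⟩⟩,
    fun m _ ha => ha ▸ aux_sol m⟩
  rintro ⟨y, h0, hy⟩
  have hp := (Fact.out : p.Prime)
  have heq : y.derivativeFun * (1 + X) = PowerSeries.C a * (1 + y) := by
    rw [hy, mul_assoc, mul_comm ((1 + X : PowerSeries k)⁻¹), aux_inv, mul_one]
  have hc : ∀ n : ℕ, coeff n (y.derivativeFun * (1 + X)) =
      coeff n (PowerSeries.C a * (1 + y)) := fun n => by rw [heq]
  have h1 : coeff 1 y = a := by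
    have h := hc 0
    rw [mul_one_add, map_add] at h
    simp [coeff_derivativeFun_aux, h0, coeff_zero_eq_constantCoeff] at h
    exact h
  have hrec : ∀ n : ℕ, ((n : k) + 2) * coeff (n + 2) y =
      (a - ((n : k) + 1)) * coeff (n + 1) y := by
    intro n
    have h := hc (n + 1)
    rw [mul_one_add, map_add, coeff_succ_mul_X, coeff_derivativeFun_aux, coeff_derivativeFun_aux,
      coeff_C_mul, map_add] at h
    rw [show (coeff (n+1)) (1 : PowerSeries k) = 0 by simp [coeff_one]] at h
    push_cast at h ⊢
    linear_combination h
  have key : ∀ n : ℕ, ((n + 1).factorial : k) * coeff (n + 1) y =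
      ∏ j ∈ Finset.range (n + 1), (a - j) := by
    intro n
    induction n with
    | zero => simpa using h1
    | succ n ih =>
        rw [Nat.factorial_succ, Finset.prod_range_succ, ← ih]
        push_cast
        have := hrec n
        push_cast at this
        linear_combination ((n + 1).factorial : k) * this
  obtain ⟨q, hq⟩ : ∃ q, p = q + 1 := ⟨p - 1, (Nat.succ_pred_eq_of_pos hp.pos).symm⟩
  have hfacp : ((p.factorial : k)) = 0 := by
    obtain ⟨c, hcc⟩ := Nat.dvd_factorial hp.pos le_rfl
    rw [hcc]
    push_cast
    rw [CharP.cast_eq_zero k p, zero_mul]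
  have hk := key q
  rw [← hq, hfacp, zero_mul] at hk
  obtain ⟨j, hj, hja⟩ := Finset.prod_eq_zero_iff.mp hk.symm
  exact ⟨j, Finset.mem_range.mp hj, sub_eq_zero.mp hja⟩
end

section
/- Let $k$ be a field of characteristic $p > 0$, $a \in k$, and let $y_1, y_2 \in k[[x]]$ be two solutions with zero constant term of the formal differential equation $y' = a \cdot \frac{1+y}{1+x}$. Then the formal derivative of $\frac{y_1+1}{y_2+1}$ is zero; consequently $\frac{y_1+1}{y_2+1}$ lies in the subring $k[[x^p]]$ of $k[[x]]$. -/
open PowerSeries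

/-- If `y₁, y₂ ∈ x·k[[x]]` (char `k = p > 0`) both solve `y' = a (1+y)/(1+x)`, then
`(y₁+1)/(y₂+1)` has zero formal derivative, hence lies in the subring `k[[x^p]]`. -/
theorem quotient_of_solutions_in_xp {k : Type*} [Field k] (p : ℕ) [Fact p.Prime]
    [CharP k p] (a : k) (y₁ y₂ : PowerSeries k)
    (h₁0 : PowerSeries.constantCoeff y₁ = 0)
    (h₂0 : PowerSeries.constantCoeff y₂ = 0)
    (h₁ : y₁.derivativeFun = PowerSeries.C a * (1 + y₁) * (1 + PowerSeries.X)⁻¹)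
    (h₂ : y₂.derivativeFun = PowerSeries.C a * (1 + y₂) * (1 + PowerSeries.X)⁻¹) :
    ((y₁ + 1) * (y₂ + 1)⁻¹).derivativeFun = 0 ∧
    ∀ n : ℕ, ¬ p ∣ n → PowerSeries.coeff n ((y₁ + 1) * (y₂ + 1)⁻¹) = 0 := by
  have hv0 : constantCoeff (y₂ + 1) ≠ 0 := by
    simp [h₂0]
  have hv : (y₂ + 1) * (y₂ + 1)⁻¹ = 1 := PowerSeries.mul_inv_cancel _ hv0
  -- derivative of (y₂+1)⁻¹
  have hinv : ((y₂ + 1)⁻¹).derivativeFun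
      = -((y₂ + 1)⁻¹ * (y₂ + 1)⁻¹ * (y₂ + 1).derivativeFun) := by
    have h := congrArg derivativeFun hv
    rw [derivativeFun_mul, derivativeFun_one] at h
    have h' := congrArg (fun z => (y₂ + 1)⁻¹ * z) h
    simp only [smul_eq_mul, mul_add, mul_zero] at h'
    have : (y₂ + 1)⁻¹ * ((y₂ + 1) * ((y₂ + 1)⁻¹).derivativeFun) = ((y₂ + 1)⁻¹).derivativeFun := by
      rw [← mul_assoc, mul_comm ((y₂ + 1)⁻¹) (y₂ + 1), hv, one_mul]
    rw [this] at h'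
    linear_combination h'
  have hd1 : (y₁ + 1).derivativeFun = PowerSeries.C a * (1 + y₁) * (1 + PowerSeries.X)⁻¹ := by
    rw [derivativeFun_add, derivativeFun_one, add_zero, h₁]
  have hd2 : (y₂ + 1).derivativeFun = PowerSeries.C a * (1 + y₂) * (1 + PowerSeries.X)⁻¹ := by
    rw [derivativeFun_add, derivativeFun_one, add_zero, h₂]
  have key : ((y₁ + 1) * (y₂ + 1)⁻¹).derivativeFun = 0 := by
    rw [derivativeFun_mul, hinv, hd1, hd2]
    simp only [smul_eq_mul]
    have h1 : (1 : PowerSeries k) + y₁ = y₁ + 1 := by ring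
    have h2 : (1 : PowerSeries k) + y₂ = y₂ + 1 := by ring
    rw [h1, h2]
    calc (y₁ + 1) * -((y₂ + 1)⁻¹ * (y₂ + 1)⁻¹ *
          (PowerSeries.C a * (y₂ + 1) * (1 + PowerSeries.X)⁻¹))
        + (y₂ + 1)⁻¹ * (PowerSeries.C a * (y₁ + 1) * (1 + PowerSeries.X)⁻¹)
        = ((y₂ + 1) * (y₂ + 1)⁻¹) * (-((y₁ + 1) * ((y₂ + 1)⁻¹ *
            (PowerSeries.C a * (1 + PowerSeries.X)⁻¹))))
          + (y₂ + 1)⁻¹ * (PowerSeries.C a * (y₁ + 1) * (1 + PowerSeries.X)⁻¹) := by ring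
      _ = 0 := by rw [hv]; ring
  refine ⟨key, fun n hn => ?_⟩
  obtain ⟨m, rfl⟩ : ∃ m, n = m + 1 := by
    cases n with
    | zero => exact absurd (dvd_zero p) hn
    | succ m => exact ⟨m, rfl⟩
  have := congrArg (PowerSeries.coeff m) key
  change PowerSeries.coeff m (derivative k ((y₁ + 1) * (y₂ + 1)⁻¹)) = PowerSeries.coeff m 0 at this
  rw [coeff_derivative, map_zero] at this
  have hcast : ((m : k) + 1) ≠ 0 := by
    have : ¬ (p : ℕ) ∣ (m + 1) := hn
    simpa [Nat.cast_add, Nat.cast_one] using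
      (fun h => this ((CharP.cast_eq_zero_iff k p (m + 1)).mp (by push_cast at h ⊢; exact h)))
  exact (mul_eq_zero.mp this).resolve_right hcast
end
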